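/- Let S be an idempotent semifield, A ∈ M_n(S) with det_ε(A) ≠ 0, b a regular vector, and A⁻ = det_ε(A)⁻¹ adj_ε(A). If (AA⁻)_{ij} ⊗ b_j ≤ b_i for all i, j, then X* = A⁻b is a solution of AX = b. -/

import Mathlib

/-- An `ε`-function on a semiring `S`. -/
def IsEpsFn {S : Type*} [Semiring S] (ε : S → S) : Prop :=
  Function.Bijective ε ∧ (∀ a : S, ε (ε a) = a) ∧ (∀ a b : S, ε (a + b) = ε a + ε b) ∧
    (∀ a b : S, ε (a * b) = ε a * b) ∧ (∀ a b : S, ε (a * b) = a * ε b)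

/-- The `ε`-determinant: `det_ε A = ⊕_σ ε^{τ(σ)}(∏ i, a_{i σ(i)})`, where only the
parity of the number of inversions `τ(σ)` (i.e. the sign of `σ`) matters since
`ε ∘ ε = id`. -/
def epsDet {S : Type*} [CommSemiring S] (ε : S → S) {n : ℕ}
    (A : Matrix (Fin n) (Fin n) S) : S :=
  ∑ σ : Equiv.Perm (Fin n),
    if Equiv.Perm.sign σ = 1 then ∏ i, A i (σ i) else ε (∏ i, A i (σ i))

/-- The `ε`-adjoint matrix: `adj_ε(A)_{ij} = ε^{(i+j)} det_ε (A(j|i))`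
(for 1-based `i, j`, whose parity agrees with that of `i.val + j.val`). -/
def epsAdj {S : Type*} [CommSemiring S] (ε : S → S) {n : ℕ}
    (A : Matrix (Fin (n + 1)) (Fin (n + 1)) S) : Matrix (Fin (n + 1)) (Fin (n + 1)) S :=
  fun i j =>
    if (i.val + j.val) % 2 = 0 then epsDet ε (A.submatrix j.succAbove i.succAbove)
    else ε (epsDet ε (A.submatrix j.succAbove i.succAbove))

/-- The pseudo-inverse `A⁻ = det_ε(A)⁻¹ • adj_ε(A)` over a semifield. -/
noncomputable def pseudoInv {S : Type*} [Semifield S] (ε : S → S) {n : ℕ}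
    (A : Matrix (Fin (n + 1)) (Fin (n + 1)) S) : Matrix (Fin (n + 1)) (Fin (n + 1)) S :=
  (epsDet ε A)⁻¹ • epsAdj ε A

section myHelpers
variable {S : Type*} [Semifield S]

lemma my_le_sum (hid : ∀ a : S, a + a = a) {ι} [Fintype ι] (f : ι → S) (a : ι) :
    f a + ∑ x, f x = ∑ x, f x := by
  classical
  rw [← Finset.add_sum_erase _ f (Finset.mem_univ a), ← add_assoc, hid]

lemma my_sum_le (hid : ∀ a : S, a + a = a) {ι} [Fintype ι] (f : ι → S) (c : S)
    (h : ∀ x, f x + c = c) : (∑ x, f x) + c = c := by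
  classical
  induction (Finset.univ : Finset ι) using Finset.induction with
  | empty => simp
  | insert _ _ hx ih => rename_i s _; rw [Finset.sum_insert hx, add_assoc, ih, h]

lemma eps_eq_id (htot : ∀ a b : S, a + b = b ∨ b + a = a) {ε : S → S}
    (hε : IsEpsFn ε) : ∀ a, ε a = a := by
  obtain ⟨-, hεε, -, hmul, -⟩ := hε
  have hu : ∀ a, ε a = ε 1 * a := fun a => by rw [← hmul, one_mul]
  have hu2 : ε 1 * ε 1 = 1 := by rw [← hu (ε 1), hεε]
  have hu1 : ε 1 = 1 := by
    rcases htot (ε 1) 1 with h | h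
    · have h2 : 1 + ε 1 = ε 1 := by
        have := congrArg (· * ε 1) h
        simpa [add_mul, hu2] using this
      calc ε 1 = 1 + ε 1 := h2.symm
        _ = ε 1 + 1 := add_comm _ _
        _ = 1 := h
    · have h2 : ε 1 + 1 = 1 := by
        have := congrArg (· * ε 1) h
        simpa [add_mul, hu2] using this
      calc ε 1 = 1 + ε 1 := h.symm
        _ = ε 1 + 1 := add_comm _ _
        _ = 1 := h2
  intro a; rw [hu, hu1, one_mul]
end myHelpers

/-- Over an idempotent semifield (additively idempotent, totally ordered by
`a ≤ b ↔ a + b = b`), if `(AA⁻)_{ij} ⊗ b_j ≤ b_i` for all `i, j`, then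
`X* = A⁻ b` is a solution of `A X = b`. -/
theorem stmt_9 {S : Type*} [Semifield S] (hid : ∀ a : S, a + a = a)
    (htot : ∀ a b : S, a + b = b ∨ b + a = a) {n : ℕ} (ε : S → S) (hε : IsEpsFn ε)
    (A : Matrix (Fin (n + 1)) (Fin (n + 1)) S) (hdet : epsDet ε A ≠ 0)
    (b : Fin (n + 1) → S) (hb : ∀ i, b i ≠ 0)
    (hcond : ∀ i j, (A * pseudoInv ε A) i j * b j + b i = b i) :
    A.mulVec ((pseudoInv ε A).mulVec b) = b := by
  have hε' : ∀ a, ε a = a := eps_eq_id htot hε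
  have hdetper : ∀ m (B : Matrix (Fin m) (Fin m) S),
      epsDet ε B = ∑ σ : Equiv.Perm (Fin m), ∏ i, B i (σ i) := by
    intro m B
    refine Finset.sum_congr rfl fun σ _ => ?_
    rw [hε']; split <;> rfl
  have hadj : ∀ k i, epsAdj ε A k i = epsDet ε (A.submatrix i.succAbove k.succAbove) := by
    intro k i
    unfold epsAdj
    rw [hε']; split <;> rfl
  have key : ∀ i : Fin (n + 1),
      epsDet ε A + (∑ k, A i k * epsDet ε (A.submatrix i.succAbove k.succAbove))
        = ∑ k, A i k * epsDet ε (A.submatrix i.succAbove k.succAbove) := by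
    intro i
    rw [hdetper]
    apply my_sum_le hid
    intro σ
    set k := σ i with hk
    have hne : ∀ x : Fin (n + 1), x ≠ i ↔ σ x ≠ k := by
      intro x
      constructor
      · intro hx hc; exact hx (σ.injective (hc.trans hk))
      · intro hx hc; exact hx (by rw [hc, hk])
    let σ' : Equiv.Perm (Fin n) :=
      (finSuccAboveEquiv i).trans ((Equiv.subtypeEquiv σ hne).trans (finSuccAboveEquiv k).symm)
    have hσ' : ∀ p : Fin n, k.succAbove (σ' p) = σ (i.succAbove p) := by
      intro p
      have h0 : (finSuccAboveEquiv k) (σ' p)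
          = (Equiv.subtypeEquiv σ hne) ((finSuccAboveEquiv i) p) :=
        (finSuccAboveEquiv k).apply_symm_apply _
      have h1 := congrArg Subtype.val h0
      simpa [finSuccAboveEquiv_apply, Equiv.subtypeEquiv] using h1
    have hprod : ∏ j, A j (σ j)
        = A i k * ∏ p : Fin n, (A.submatrix i.succAbove k.succAbove) p (σ' p) := by
      rw [Fin.prod_univ_succAbove (fun j => A j (σ j)) i]
      congr 1
      refine Finset.prod_congr rfl fun p _ => ?_
      rw [Matrix.submatrix_apply, hσ']
    rw [hprod]
    have h1 : (∏ p : Fin n, (A.submatrix i.succAbove k.succAbove) p (σ' p))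
        + epsDet ε (A.submatrix i.succAbove k.succAbove)
        = epsDet ε (A.submatrix i.succAbove k.succAbove) := by
      rw [hdetper]
      exact my_le_sum hid (fun τ => ∏ p, (A.submatrix i.succAbove k.succAbove) p (τ p)) σ'
    have h2 : A i k * (∏ p : Fin n, (A.submatrix i.succAbove k.succAbove) p (σ' p))
        + A i k * epsDet ε (A.submatrix i.succAbove k.succAbove)
        = A i k * epsDet ε (A.submatrix i.succAbove k.succAbove) := by
      rw [← mul_add, h1]
    have h3 := my_le_sum hid (fun k => A i k * epsDet ε (A.submatrix i.succAbove k.succAbove)) k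
    calc A i k * (∏ p : Fin n, (A.submatrix i.succAbove k.succAbove) p (σ' p))
          + ∑ k, A i k * epsDet ε (A.submatrix i.succAbove k.succAbove)
        = A i k * (∏ p : Fin n, (A.submatrix i.succAbove k.succAbove) p (σ' p))
          + (A i k * epsDet ε (A.submatrix i.succAbove k.succAbove)
            + ∑ k, A i k * epsDet ε (A.submatrix i.succAbove k.succAbove)) := by rw [h3]
      _ = (A i k * (∏ p : Fin n, (A.submatrix i.succAbove k.succAbove) p (σ' p))
          + A i k * epsDet ε (A.submatrix i.succAbove k.succAbove))
          + ∑ k, A i k * epsDet ε (A.submatrix i.succAbove k.succAbove) := by rw [add_assoc]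
      _ = _ := by rw [h2, h3]
  have hdiag : ∀ i, b i + (A * pseudoInv ε A) i i * b i = (A * pseudoInv ε A) i i * b i := by
    intro i
    have hent : (A * pseudoInv ε A) i i
        = (epsDet ε A)⁻¹ * ∑ k, A i k * epsDet ε (A.submatrix i.succAbove k.succAbove) := by
      rw [Matrix.mul_apply, Finset.mul_sum]
      refine Finset.sum_congr rfl fun k _ => ?_
      rw [pseudoInv, Matrix.smul_apply, hadj, smul_eq_mul]; ring
    have h1 : 1 + (A * pseudoInv ε A) i i = (A * pseudoInv ε A) i i := by
      have h4 := congrArg (fun x => (epsDet ε A)⁻¹ * x) (key i)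
      simp only [mul_add] at h4
      rw [inv_mul_cancel₀ hdet] at h4
      rw [hent]
      exact h4
    have h5 := congrArg (fun x => x * b i) h1
    simpa [add_mul] using h5
  funext i
  rw [Matrix.mulVec_mulVec]
  show ∑ j, (A * pseudoInv ε A) i j * b j = b i
  have hle : (∑ j, (A * pseudoInv ε A) i j * b j) + b i = b i :=
    my_sum_le hid _ _ (fun j => hcond i j)
  have hge : b i + ∑ j, (A * pseudoInv ε A) i j * b j
      = ∑ j, (A * pseudoInv ε A) i j * b j := by
    have hterm := my_le_sum hid (fun j => (A * pseudoInv ε A) i j * b j) i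
    calc b i + ∑ j, (A * pseudoInv ε A) i j * b j
        = b i + ((A * pseudoInv ε A) i i * b i + ∑ j, (A * pseudoInv ε A) i j * b j) := by
          rw [hterm]
      _ = (b i + (A * pseudoInv ε A) i i * b i)
          + ∑ j, (A * pseudoInv ε A) i j * b j := by rw [add_assoc]
      _ = _ := by rw [hdiag i, hterm]
  rw [← hge, add_comm]
  exact hle
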